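/- Let G be a connected simple graph with diameter d ≥ 3 that is not self-centered (rad(G) < diam(G)). Then the eccentricity matrix ε(G) has at least two positive eigenvalues. -/

import Mathlib

open Finset Polynomial

noncomputable def ecc {V : Type*} [Fintype V] (G : SimpleGraph V) (u : V) : ℕ :=
  Finset.univ.sup (G.dist u)

noncomputable def eccMatrix {V : Type*} [Fintype V] (G : SimpleGraph V) :
    Matrix V V ℝ := fun u v =>
  if G.dist u v = min (ecc G u) (ecc G v) then (G.dist u v : ℝ) else 0

theorem eccMatrix_isHermitian {V : Type*} [Fintype V] (G : SimpleGraph V) :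
    (eccMatrix G).IsHermitian := by
  unfold Matrix.IsHermitian
  ext u v
  simp only [Matrix.conjTranspose_apply, eccMatrix, star_trivial]
  rw [SimpleGraph.dist_comm, min_comm]

/-- Number of positive eigenvalues (with multiplicity) of a real symmetric matrix. -/
noncomputable def posEigCount {V : Type*} [Fintype V] [DecidableEq V]
    {A : Matrix V V ℝ} (hA : A.IsHermitian) : ℕ :=
  (Finset.univ.filter fun i => 0 < hA.eigenvalues i).card

/-- The join of two simple graphs: disjoint union plus all edges in between. -/
def graphJoin {α β : Type*} (G : SimpleGraph α) (H : SimpleGraph β) :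
    SimpleGraph (α ⊕ β) where
  Adj x y := match x, y with
    | Sum.inl a, Sum.inl b => G.Adj a b
    | Sum.inr a, Sum.inr b => H.Adj a b
    | _, _ => True
  symm := ⟨by rintro (a|a) (b|b) h <;> first | exact h.symm | trivial⟩
  loopless := ⟨by rintro (a|a) h <;> first | exact G.irrefl h | exact H.irrefl h⟩

/-- The disjoint union of two simple graphs. -/
def graphSum {α β : Type*} (G : SimpleGraph α) (H : SimpleGraph β) :
    SimpleGraph (α ⊕ β) where
  Adj x y := match x, y with
    | Sum.inl a, Sum.inl b => G.Adj a b
    | Sum.inr a, Sum.inr b => H.Adj a b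
    | _, _ => False
  symm := ⟨by rintro (a|a) (b|b) h <;> first | exact h.symm | trivial⟩
  loopless := ⟨by rintro (a|a) h <;> first | exact G.irrefl h | exact H.irrefl h⟩

/-- Disjoint union of blocks indexed by `ι`; block `i` has `r i` vertices and is a
clique when `P i` holds and a coclique (independent set) otherwise. -/
def blocksGraph {ι : Type*} (r : ι → ℕ) (P : ι → Prop) :
    SimpleGraph (Σ i, Fin (r i)) where
  Adj x y := x ≠ y ∧ x.1 = y.1 ∧ P x.1
  symm := ⟨by rintro x y ⟨h1, h2, h3⟩; exact ⟨h1.symm, h2.symm, h2 ▸ h3⟩⟩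
  loopless := ⟨fun x h => h.1 rfl⟩

/-! ### Auxiliary lemmas -/

section MyAux

open Matrix

variable {V : Type*} [Fintype V]

lemma my_dist_le_ecc (G : SimpleGraph V) (u v : V) : G.dist u v ≤ ecc G u :=
  Finset.le_sup (Finset.mem_univ v)

lemma my_ecc_le_sup (G : SimpleGraph V) (u : V) : ecc G u ≤ Finset.univ.sup (ecc G) :=
  Finset.le_sup (Finset.mem_univ u)

lemma my_eccMatrix_nonneg (G : SimpleGraph V) (u v : V) : 0 ≤ eccMatrix G u v := by
  unfold eccMatrix
  split
  · positivity
  · exact le_refl 0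

lemma my_eccMatrix_diag (G : SimpleGraph V) (u : V) : eccMatrix G u u = 0 := by
  unfold eccMatrix
  split <;> simp [SimpleGraph.dist_self]

lemma my_eccMatrix_comm (G : SimpleGraph V) (u v : V) :
    eccMatrix G u v = eccMatrix G v u := by
  unfold eccMatrix
  rw [SimpleGraph.dist_comm, min_comm]

lemma my_exists_partner [Nonempty V] (G : SimpleGraph V) (u : V) :
    ∃ v, eccMatrix G u v = (ecc G u : ℝ) := by
  obtain ⟨v, -, hv⟩ := Finset.exists_mem_eq_sup Finset.univ Finset.univ_nonempty (G.dist u)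
  have hv' : ecc G u = G.dist u v := hv
  refine ⟨v, ?_⟩
  have h2 : G.dist u v ≤ ecc G v := by
    rw [SimpleGraph.dist_comm]; exact my_dist_le_ecc G v u
  have h1 : G.dist u v ≤ ecc G u := my_dist_le_ecc G u v
  have hmin : G.dist u v = min (ecc G u) (ecc G v) := by omega
  unfold eccMatrix
  rw [if_pos hmin, hv']

/-- The key combinatorial configuration: an `ε`-positive pair `(u,v)`, an `ε`-positive
pair `(x,y)`, with `u` decoupled from both `x` and `y`. -/
lemma my_exists_config (G : SimpleGraph V) (hconn : G.Connected)
    (hdiam : 3 ≤ Finset.univ.sup (ecc G)) :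
    ∃ u v x y : V, eccMatrix G u x = 0 ∧ eccMatrix G u y = 0 ∧
      0 < eccMatrix G u v ∧ 0 < eccMatrix G x y := by
  have hne : Nonempty V := hconn.nonempty
  set D := Finset.univ.sup (ecc G) with hD
  obtain ⟨x, -, hx⟩ := Finset.exists_mem_eq_sup Finset.univ Finset.univ_nonempty (ecc G)
  obtain ⟨y, -, hy⟩ := Finset.exists_mem_eq_sup Finset.univ Finset.univ_nonempty (G.dist x)
  have heccx : ecc G x = D := hx.symm
  have hdxy : G.dist x y = D := by
    have : ecc G x = G.dist x y := hy
    omega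
  have heccy : ecc G y = D := by
    have h1 : ecc G y ≤ D := my_ecc_le_sup G y
    have h2 : G.dist y x ≤ ecc G y := my_dist_le_ecc G y x
    rw [SimpleGraph.dist_comm] at h2
    omega
  have hdxy0 : G.dist x y ≠ 0 := by omega
  obtain ⟨p, hp⟩ := SimpleGraph.exists_walk_of_dist_ne_zero hdxy0
  cases p with
  | nil =>
    rw [SimpleGraph.dist_self] at hdxy
    omega
  | @cons _ b _ h q =>
    have hdxb : G.dist x b = 1 := SimpleGraph.dist_eq_one_iff_adj.mpr h
    rw [SimpleGraph.Walk.length_cons] at hp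
    have hq1 : G.dist b y ≤ q.length := SimpleGraph.dist_le q
    have htri1 : G.dist x y ≤ G.dist x b + G.dist b y := hconn.dist_triangle
    have hdby : G.dist b y = D - 1 := by omega
    have hdyb0 : G.dist y b ≠ 0 := by rw [SimpleGraph.dist_comm]; omega
    obtain ⟨p2, hp2⟩ := SimpleGraph.exists_walk_of_dist_ne_zero hdyb0
    cases p2 with
    | nil =>
      rw [SimpleGraph.dist_self] at hdyb0
      exact absurd rfl hdyb0
    | @cons _ c _ h2 q2 =>
      have hdyc : G.dist y c = 1 := SimpleGraph.dist_eq_one_iff_adj.mpr h2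
      rw [SimpleGraph.Walk.length_cons] at hp2
      rw [SimpleGraph.dist_comm (u := y) (v := b)] at hp2
      have hq2 : G.dist c b ≤ q2.length := SimpleGraph.dist_le q2
      have htri2 : G.dist y b ≤ G.dist y c + G.dist c b := hconn.dist_triangle
      rw [SimpleGraph.dist_comm (u := y) (v := b)] at htri2
      have hdcb : G.dist c b = D - 2 := by omega
      have htri3 : G.dist x y ≤ G.dist x c + G.dist c y := hconn.dist_triangle
      have htri4 : G.dist x c ≤ G.dist x b + G.dist b c := hconn.dist_triangle
      rw [SimpleGraph.dist_comm (u := b) (v := c)] at htri4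
      rw [SimpleGraph.dist_comm (u := c) (v := y)] at htri3
      have hdxc : G.dist x c = D - 1 := by omega
      have heb1 : D - 1 ≤ ecc G b := by
        have := my_dist_le_ecc G b y
        omega
      have heb2 : ecc G b ≤ D := my_ecc_le_sup G b
      have hec1 : D - 1 ≤ ecc G c := by
        have := my_dist_le_ecc G c x
        rw [SimpleGraph.dist_comm] at this
        omega
      rcases (by omega : ecc G b = D ∨ ecc G b = D - 1) with heb | heb
      · -- the neighbour of x is peripheral: use (b, its partner, x, y)
        obtain ⟨v, hv⟩ := my_exists_partner G b
        refine ⟨b, v, x, y, ?_, ?_, ?_, ?_⟩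
        · have h' : ¬ (G.dist b x = min (ecc G b) (ecc G x)) := by
            rw [SimpleGraph.dist_comm, hdxb, heb, heccx]; omega
          unfold eccMatrix
          rw [if_neg h']
        · have h' : ¬ (G.dist b y = min (ecc G b) (ecc G y)) := by
            rw [hdby, heb, heccy]; omega
          unfold eccMatrix
          rw [if_neg h']
        · rw [hv, heb]
          have : (0:ℕ) < D := by omega
          exact_mod_cast this
        · have h' : G.dist x y = min (ecc G x) (ecc G y) := by
            rw [hdxy, heccx, heccy]; omega
          unfold eccMatrix
          rw [if_pos h', hdxy]
          have : (0:ℕ) < D := by omega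
          exact_mod_cast this
      · -- the neighbour of x has eccentricity D - 1: use (c, its partner, b, y)
        obtain ⟨v, hv⟩ := my_exists_partner G c
        refine ⟨c, v, b, y, ?_, ?_, ?_, ?_⟩
        · have h' : ¬ (G.dist c b = min (ecc G c) (ecc G b)) := by
            rw [hdcb, heb]; omega
          unfold eccMatrix
          rw [if_neg h']
        · have h' : ¬ (G.dist c y = min (ecc G c) (ecc G y)) := by
            rw [SimpleGraph.dist_comm, hdyc, heccy]; omega
          unfold eccMatrix
          rw [if_neg h']
        · rw [hv]
          have : (0:ℕ) < ecc G c := by omega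
          exact_mod_cast this
        · have h' : G.dist b y = min (ecc G b) (ecc G y) := by
            rw [hdby, heb, heccy]; omega
          unfold eccMatrix
          rw [if_pos h', hdby]
          have : (0:ℕ) < D - 1 := by omega
          exact_mod_cast this

variable [DecidableEq V] {A : Matrix V V ℝ}

lemma my_quad_form_eq (hA : A.IsHermitian) (v : V → ℝ) :
    v ⬝ᵥ A *ᵥ v = ∑ i, hA.eigenvalues i *
      ((star (hA.eigenvectorUnitary : Matrix V V ℝ) *ᵥ v) i) ^ 2 := by
  have hsp := hA.spectral_theorem
  rw [RCLike.ofReal_real_eq_id, Unitary.conjStarAlgAut_apply] at hsp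
  conv_lhs => rw [hsp]
  rw [← Matrix.mulVec_mulVec, ← Matrix.mulVec_mulVec, Matrix.dotProduct_mulVec]
  have hvU : v ᵥ* (hA.eigenvectorUnitary : Matrix V V ℝ) =
      star (hA.eigenvectorUnitary : Matrix V V ℝ) *ᵥ v := by
    ext i
    simp [Matrix.vecMul, Matrix.mulVec, dotProduct, Matrix.star_apply, mul_comm]
  rw [hvU]
  simp only [dotProduct, Matrix.mulVec_diagonal, Function.comp, id]
  exact Finset.sum_congr rfl fun i _ => by ring

lemma my_bilin_comm (hA : A.IsHermitian) (v w : V → ℝ) :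
    v ⬝ᵥ A *ᵥ w = w ⬝ᵥ A *ᵥ v := by
  have hAT : Aᵀ = A := by
    ext i j
    have h1 : Aᴴ i j = A i j := congrFun (congrFun hA i) j
    simpa [Matrix.conjTranspose_apply] using h1
  rw [Matrix.dotProduct_mulVec, ← hAT, Matrix.vecMul_transpose, dotProduct_comm, hAT]

lemma my_key_lemma (hA : A.IsHermitian) (w₁ w₂ : V → ℝ)
    (h1 : 0 < w₁ ⬝ᵥ A *ᵥ w₁) (h2 : 0 < w₂ ⬝ᵥ A *ᵥ w₂)
    (h3 : (w₁ ⬝ᵥ A *ᵥ w₂) ^ 2 < (w₁ ⬝ᵥ A *ᵥ w₁) * (w₂ ⬝ᵥ A *ᵥ w₂)) :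
    2 ≤ posEigCount hA := by
  by_contra hcon
  push_neg at hcon
  have hcard : (Finset.univ.filter fun i => 0 < hA.eigenvalues i).card ≤ 1 := by
    unfold posEigCount at hcon; omega
  have hnonpos : ∀ u : V → ℝ,
      (∀ i, 0 < hA.eigenvalues i →
        ((star (hA.eigenvectorUnitary : Matrix V V ℝ) *ᵥ u) i) = 0) →
      u ⬝ᵥ A *ᵥ u ≤ 0 := by
    intro u hu
    rw [my_quad_form_eq hA u]
    apply Finset.sum_nonpos
    intro i _
    by_cases hi : 0 < hA.eigenvalues i
    · rw [hu i hi]; simp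
    · nlinarith [sq_nonneg ((star (hA.eigenvectorUnitary : Matrix V V ℝ) *ᵥ u) i),
        not_lt.mp hi]
  by_cases hex : ∃ i, 0 < hA.eigenvalues i
  · obtain ⟨i0, hi0⟩ := hex
    have huniq : ∀ j, 0 < hA.eigenvalues j → j = i0 := by
      intro j hj
      exact Finset.card_le_one.mp hcard j (by simp [hj]) i0 (by simp [hi0])
    set a := (star (hA.eigenvectorUnitary : Matrix V V ℝ) *ᵥ w₁) i0 with ha_def
    set b := (star (hA.eigenvectorUnitary : Matrix V V ℝ) *ᵥ w₂) i0 with hb_def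
    by_cases ha : a = 0
    · have : w₁ ⬝ᵥ A *ᵥ w₁ ≤ 0 :=
        hnonpos w₁ (fun i hi => by rw [huniq i hi, ← ha_def]; exact ha)
      linarith
    · have hTu : ∀ i, 0 < hA.eigenvalues i →
          ((star (hA.eigenvectorUnitary : Matrix V V ℝ) *ᵥ (b • w₁ - a • w₂)) i) = 0 := by
        intro i hi
        rw [huniq i hi, Matrix.mulVec_sub, Matrix.mulVec_smul, Matrix.mulVec_smul]
        simp only [Pi.sub_apply, Pi.smul_apply, smul_eq_mul, ← ha_def, ← hb_def]
        ring
      have hQu := hnonpos _ hTu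
      have hBsymm := my_bilin_comm hA w₂ w₁
      have hexp : (b • w₁ - a • w₂) ⬝ᵥ A *ᵥ (b • w₁ - a • w₂) =
          b ^ 2 * (w₁ ⬝ᵥ A *ᵥ w₁) - 2 * a * b * (w₁ ⬝ᵥ A *ᵥ w₂)
            + a ^ 2 * (w₂ ⬝ᵥ A *ᵥ w₂) := by
        rw [Matrix.mulVec_sub, Matrix.mulVec_smul, Matrix.mulVec_smul,
          sub_dotProduct, smul_dotProduct, smul_dotProduct,
          dotProduct_sub, dotProduct_sub,
          dotProduct_smul, dotProduct_smul,
          dotProduct_smul, dotProduct_smul]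
        simp only [smul_eq_mul]
        rw [hBsymm]
        ring
      rw [hexp] at hQu
      have ha2 : 0 < a ^ 2 := by positivity
      nlinarith [hQu, ha2, h1, h2, h3, sq_nonneg (b * (w₁ ⬝ᵥ A *ᵥ w₁) - a * (w₁ ⬝ᵥ A *ᵥ w₂))]
  · push_neg at hex
    have : w₁ ⬝ᵥ A *ᵥ w₁ ≤ 0 :=
      hnonpos w₁ (fun i hi => absurd hi (not_lt.mpr (hex i)))
    linarith


lemma my_main (G : SimpleGraph V) (hconn : G.Connected)
    (hdiam : 3 ≤ Finset.univ.sup (ecc G)) :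
    2 ≤ posEigCount (eccMatrix_isHermitian G) := by
  classical
  obtain ⟨u, v, x, y, hux, huy, huv, hxy⟩ := my_exists_config G hconn hdiam
  set A := eccMatrix G with hAdef
  have hsymm : ∀ a b, A a b = A b a := fun a b => my_eccMatrix_comm G a b
  have hdiag : ∀ a, A a a = 0 := fun a => my_eccMatrix_diag G a
  have hnn : ∀ a b, 0 ≤ A a b := fun a b => my_eccMatrix_nonneg G a b
  set s : ℝ := A v x + A v y with hs_def
  have hs_nonneg : 0 ≤ s := add_nonneg (hnn v x) (hnn v y)
  set α : ℝ := (A u v * A x y) / (s ^ 2 + 1) with hα_def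
  have hden : (0:ℝ) < s ^ 2 + 1 := by positivity
  have hαpos : 0 < α := div_pos (mul_pos huv hxy) hden
  have hαeq : α * (s ^ 2 + 1) = A u v * A x y := by
    rw [hα_def]; field_simp
  set w₁ : V → ℝ := (Pi.single u 1 : V → ℝ) + α • (Pi.single v 1 : V → ℝ) with hw₁
  set w₂ : V → ℝ := (Pi.single x 1 : V → ℝ) + (Pi.single y 1 : V → ℝ) with hw₂
  have hbs : ∀ (i j : V), (Pi.single i 1 : V → ℝ) ⬝ᵥ A *ᵥ (Pi.single j 1 : V → ℝ) = A i j := by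
    intro i j
    simp [Matrix.mulVec_single, single_dotProduct]
  have hQ1 : w₁ ⬝ᵥ A *ᵥ w₁ = 2 * α * A u v := by
    rw [hw₁, Matrix.mulVec_add, Matrix.mulVec_smul,
      add_dotProduct, smul_dotProduct,
      dotProduct_add, dotProduct_add,
      dotProduct_smul, dotProduct_smul]
    simp only [smul_eq_mul, hbs]
    rw [hdiag u, hdiag v, hsymm v u]
    ring
  have hQ2 : w₂ ⬝ᵥ A *ᵥ w₂ = 2 * A x y := by
    rw [hw₂, Matrix.mulVec_add,
      add_dotProduct,
      dotProduct_add, dotProduct_add]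
    simp only [hbs]
    rw [hdiag x, hdiag y, hsymm y x]
    ring
  have hB : w₁ ⬝ᵥ A *ᵥ w₂ = α * s := by
    simp only [hw₁, hw₂, Matrix.mulVec_add, Matrix.mulVec_smul, add_dotProduct,
      smul_dotProduct, dotProduct_add, dotProduct_smul,
      smul_eq_mul, hbs]
    rw [hux, huy, hs_def]
    ring
  refine my_key_lemma (eccMatrix_isHermitian G) w₁ w₂ ?_ ?_ ?_
  · rw [hQ1]
    exact mul_pos (mul_pos two_pos hαpos) huv
  · rw [hQ2]
    linarith
  · rw [hQ1, hQ2, hB]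
    nlinarith [hαeq, hαpos, mul_pos hαpos (mul_pos huv hxy), sq_nonneg s, sq_nonneg α,
      mul_pos huv hxy]

end MyAux

/-- a connected graph with diameter at least 3 that is not self-centered
has at least two positive eccentricity eigenvalues. -/
theorem stmt2 {V : Type*} [Fintype V] [DecidableEq V] (G : SimpleGraph V)
    (hconn : G.Connected) (hdiam : 3 ≤ Finset.univ.sup (ecc G))
    (hnsc : sInf (Set.range (ecc G)) < Finset.univ.sup (ecc G)) :
    2 ≤ posEigCount (eccMatrix_isHermitian G) :=
  my_main G hconn hdiam
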